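/- Let (ξ_n)_{n≥1} be i.i.d. real random variables with E[ξ₁] < 0 and E[ξ₁²] < ∞, and let Z_n := ξ₁ + ··· + ξ_n (Z₀ = 0). Then sup_{n≥0} Z_n is integrable. -/

import Mathlib

open MeasureTheory ProbabilityTheory

set_option linter.unusedSectionVars false

section KWaux
variable {Ω : Type*} [MeasurableSpace Ω]

lemma kw_le_sup' {f : ℕ → ℝ} {n k : ℕ} (h : k < n + 1) :
    f k ≤ (Finset.range (n+1)).sup' Finset.nonempty_range_add_one f :=
  Finset.le_sup' f (Finset.mem_range.2 h)

/-- running maximum of the random walk -/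
noncomputable def kwM (ξ : ℕ → Ω → ℝ) (n : ℕ) (ω : Ω) : ℝ :=
  (Finset.range (n+1)).sup' Finset.nonempty_range_add_one
    (fun k => ∑ i ∈ Finset.range k, ξ i ω)

/-- maximum of suffix sums (reversed walk) -/
noncomputable def kwV (ξ : ℕ → Ω → ℝ) (n : ℕ) (ω : Ω) : ℝ :=
  (Finset.range (n+1)).sup' Finset.nonempty_range_add_one
    (fun k => ∑ i ∈ Finset.Ico k n, ξ i ω)

/-- abstract functional computing the running maximum from an `n`-tuple -/
noncomputable def kwG (n : ℕ) (x : Fin n → ℝ) : ℝ :=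
  (Finset.range (n+1)).sup' Finset.nonempty_range_add_one
    (fun k => ∑ i : Fin n, if (i : ℕ) < k then x i else 0)

lemma kwM_zero (ξ : ℕ → Ω → ℝ) (ω : Ω) : kwM ξ 0 ω = 0 := by
  simp [kwM]

lemma kwV_zero (ξ : ℕ → Ω → ℝ) (ω : Ω) : kwV ξ 0 ω = 0 := by
  simp [kwV]

lemma kwV_nonneg (ξ : ℕ → Ω → ℝ) (n : ℕ) (ω : Ω) : 0 ≤ kwV ξ n ω := by
  unfold kwV
  have h0 : (0:ℝ) = ∑ i ∈ Finset.Ico n n, ξ i ω := by simp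
  rw [h0]
  exact kw_le_sup' (f := fun k => ∑ i ∈ Finset.Ico k n, ξ i ω) (k := n) (n := n) (by omega)

lemma kwV_succ (ξ : ℕ → Ω → ℝ) (n : ℕ) (ω : Ω) :
    kwV ξ (n+1) ω = max (kwV ξ n ω + ξ n ω) 0 := by
  unfold kwV
  apply le_antisymm
  · apply Finset.sup'_le
    intro k hk
    rw [Finset.mem_range] at hk
    rcases Nat.lt_or_ge k (n+1) with h | h
    · have he : ∑ i ∈ Finset.Ico k (n+1), ξ i ω
          = (∑ i ∈ Finset.Ico k n, ξ i ω) + ξ n ω :=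
        Finset.sum_Ico_succ_top (by omega) _
      rw [he]
      refine le_max_of_le_left (add_le_add ?_ le_rfl)
      exact kw_le_sup' (f := fun k => ∑ i ∈ Finset.Ico k n, ξ i ω) (k := k) (n := n) (by omega)
    · have hk1 : k = n + 1 := by omega
      subst hk1
      simp
  · apply max_le
    · rw [Finset.sup'_add]
      apply Finset.sup'_le
      intro k hk
      rw [Finset.mem_range] at hk
      have he : (∑ i ∈ Finset.Ico k n, ξ i ω) + ξ n ω
          = ∑ i ∈ Finset.Ico k (n+1), ξ i ω :=
        (Finset.sum_Ico_succ_top (by omega) _).symm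
      rw [he]
      exact kw_le_sup' (f := fun k => ∑ i ∈ Finset.Ico k (n+1), ξ i ω) (k := k) (n := n+1) (by omega)
    · have h0 : (0:ℝ) = ∑ i ∈ Finset.Ico (n+1) (n+1), ξ i ω := by simp
      rw [h0]
      exact kw_le_sup' (f := fun k => ∑ i ∈ Finset.Ico k (n+1), ξ i ω) (k := n+1) (n := n+1) (by omega)

lemma kwM_nonneg (ξ : ℕ → Ω → ℝ) (n : ℕ) (ω : Ω) : 0 ≤ kwM ξ n ω := by
  unfold kwM
  have h0 : (0:ℝ) = ∑ i ∈ Finset.range 0, ξ i ω := by simp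
  rw [h0]
  exact kw_le_sup' (f := fun k => ∑ i ∈ Finset.range k, ξ i ω) (k := 0) (n := n) (by omega)

lemma sum_le_kwM (ξ : ℕ → Ω → ℝ) {k n : ℕ} (h : k ≤ n) (ω : Ω) :
    ∑ i ∈ Finset.range k, ξ i ω ≤ kwM ξ n ω := by
  unfold kwM
  exact kw_le_sup' (f := fun k => ∑ i ∈ Finset.range k, ξ i ω) (k := k) (n := n) (by omega)

lemma kwM_mono (ξ : ℕ → Ω → ℝ) {m n : ℕ} (h : m ≤ n) (ω : Ω) :
    kwM ξ m ω ≤ kwM ξ n ω := by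
  unfold kwM
  apply Finset.sup'_le
  intro k hk
  rw [Finset.mem_range] at hk
  exact sum_le_kwM ξ (by omega) ω

lemma kwM_measurable (ξ : ℕ → Ω → ℝ) (hmeas : ∀ n, Measurable (ξ n)) (n : ℕ) :
    Measurable (kwM ξ n) := by
  have he : kwM ξ n = (Finset.range (n+1)).sup' Finset.nonempty_range_add_one
      (fun k ω => ∑ i ∈ Finset.range k, ξ i ω) := by
    funext ω; rw [Finset.sup'_apply]; rfl
  rw [he]
  exact Finset.measurable_sup' _ (fun k _ => Finset.measurable_sum _ (fun i _ => hmeas i))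

lemma kwV_measurable (ξ : ℕ → Ω → ℝ) (hmeas : ∀ n, Measurable (ξ n)) (n : ℕ) :
    Measurable (kwV ξ n) := by
  have he : kwV ξ n = (Finset.range (n+1)).sup' Finset.nonempty_range_add_one
      (fun k ω => ∑ i ∈ Finset.Ico k n, ξ i ω) := by
    funext ω; rw [Finset.sup'_apply]; rfl
  rw [he]
  exact Finset.measurable_sup' _ (fun k _ => Finset.measurable_sum _ (fun i _ => hmeas i))

lemma kwG_measurable (n : ℕ) : Measurable (kwG n) := by
  have he : kwG n = (Finset.range (n+1)).sup' Finset.nonempty_range_add_one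
      (fun k x => ∑ i : Fin n, if (i : ℕ) < k then x i else 0) := by
    funext x; rw [Finset.sup'_apply]; rfl
  rw [he]
  refine Finset.measurable_sup' _ (fun k _ => Finset.measurable_sum _ (fun i _ => ?_))
  exact Measurable.ite (by simp) (measurable_pi_apply i) measurable_const

lemma kwM_eq_comp (ξ : ℕ → Ω → ℝ) (n : ℕ) (ω : Ω) :
    kwM ξ n ω = kwG n (fun i => ξ i ω) := by
  unfold kwM kwG
  apply Finset.sup'_congr _ rfl
  intro k hk
  rw [Finset.mem_range] at hk
  rw [Fin.sum_univ_eq_sum_range (fun i => if i < k then ξ i ω else 0) n]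
  rw [← Finset.sum_filter]
  congr 1
  ext i
  simp only [Finset.mem_filter, Finset.mem_range]
  omega

lemma kwV_eq_comp (ξ : ℕ → Ω → ℝ) (n : ℕ) (ω : Ω) :
    kwV ξ n ω = kwG n (fun i => ξ (Fin.rev i) ω) := by
  have key : ∀ k, (∑ i : Fin n, if (i : ℕ) < k then ξ (Fin.rev i) ω else 0)
      = ∑ i ∈ Finset.Ico (n - k) n, ξ i ω := by
    intro k
    rw [← Equiv.sum_comp Fin.revPerm
      (fun i : Fin n => if (i : ℕ) < k then ξ (Fin.rev i) ω else 0)]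
    have hterm : ∀ i : Fin n,
        (if ((Fin.revPerm i : Fin n) : ℕ) < k then ξ (Fin.rev (Fin.revPerm i)) ω else 0)
        = if n - k ≤ (i : ℕ) then ξ i ω else 0 := by
      intro i
      have hrev : ((Fin.rev i : Fin n) : ℕ) = n - (i + 1) := Fin.val_rev i
      have hlt : (i : ℕ) < n := i.isLt
      simp only [Fin.revPerm_apply, Fin.rev_rev, hrev]
      congr 1
      simp only [eq_iff_iff]
      omega
    rw [Finset.sum_congr rfl (fun i _ => hterm i)]
    rw [Fin.sum_univ_eq_sum_range (fun i => if n - k ≤ i then ξ i ω else 0) n]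
    rw [← Finset.sum_filter]
    congr 1
    ext i
    simp only [Finset.mem_filter, Finset.mem_range, Finset.mem_Ico]
    omega
  unfold kwV kwG
  apply le_antisymm
  · apply Finset.sup'_le
    intro k hk
    rw [Finset.mem_range] at hk
    have he : ∑ i ∈ Finset.Ico k n, ξ i ω
        = ∑ i : Fin n, if (i : ℕ) < n - k then ξ (Fin.rev i) ω else 0 := by
      rw [key (n - k)]
      congr 2
      omega
    rw [he]
    exact kw_le_sup' (f := fun k => ∑ i : Fin n, if (i : ℕ) < k then ξ (Fin.rev i) ω else 0) (k := n - k) (n := n)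
      (by omega)
  · apply Finset.sup'_le
    intro k hk
    rw [Finset.mem_range] at hk
    rw [key k]
    exact kw_le_sup' (f := fun k => ∑ i ∈ Finset.Ico k n, ξ i ω) (k := n - k) (n := n) (by omega)

end KWaux

section KWlaw
variable {Ω : Type*} [MeasurableSpace Ω] (μ : Measure Ω) [IsProbabilityMeasure μ]
  (ξ : ℕ → Ω → ℝ)

lemma kw_joint_map (hmeas : ∀ n, Measurable (ξ n))
    (hindep : iIndepFun ξ μ)
    (hident : ∀ n, μ.map (ξ n) = μ.map (ξ 0))
    (n : ℕ) (e : Fin n → ℕ) (he : Function.Injective e) :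
    μ.map (fun ω (i : Fin n) => ξ (e i) ω)
      = Measure.pi (fun _ : Fin n => μ.map (ξ 0)) := by
  haveI : IsProbabilityMeasure (μ.map (ξ 0)) :=
    Measure.isProbabilityMeasure_map (hmeas 0).aemeasurable
  have hjoint : Measurable (fun ω (i : Fin n) => ξ (e i) ω) :=
    measurable_pi_lambda _ (fun i => hmeas (e i))
  refine (Measure.pi_eq fun s hs => ?_).symm
  rw [Measure.map_apply hjoint (MeasurableSet.univ_pi hs)]
  classical
  set sets : ℕ → Set ℝ := fun j => ⋂ i, ⋂ (_ : e i = j), s i with hsets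
  have hsets_meas : ∀ j, MeasurableSet (sets j) :=
    fun j => MeasurableSet.iInter fun i => MeasurableSet.iInter fun _ => hs i
  have hsets_apply : ∀ i, sets (e i) = s i := by
    intro i
    apply Set.Subset.antisymm
    · exact Set.iInter_subset_of_subset i (Set.iInter_subset _ rfl)
    · intro x hx
      simp only [hsets, Set.mem_iInter]
      intro i' hi'
      rwa [he hi']
  have hkey := hindep.measure_inter_preimage_eq_mul
    (S := Finset.image e Finset.univ) (sets := sets) (fun j _ => hsets_meas j)
  have hset_eq : (⋂ j ∈ Finset.image e Finset.univ, ξ j ⁻¹' sets j)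
      = (fun ω (i : Fin n) => ξ (e i) ω) ⁻¹' Set.univ.pi s := by
    ext ω
    simp only [Set.mem_iInter, Finset.mem_image, Finset.mem_univ, true_and,
      Set.mem_preimage, Set.mem_univ_pi]
    constructor
    · intro h i
      have := h (e i) ⟨i, rfl⟩
      rwa [hsets_apply i] at this
    · rintro h j ⟨i, rfl⟩
      rw [hsets_apply i]
      exact h i
  rw [hset_eq] at hkey
  rw [hkey, Finset.prod_image (by exact fun i _ j _ h => he h)]
  apply Finset.prod_congr rfl
  intro i _
  rw [hsets_apply i, ← Measure.map_apply (hmeas (e i)) (hs i), hident (e i)]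

lemma kw_map_V_eq_map_M (hmeas : ∀ n, Measurable (ξ n))
    (hindep : iIndepFun ξ μ)
    (hident : ∀ n, μ.map (ξ n) = μ.map (ξ 0)) (n : ℕ) :
    μ.map (kwV ξ n) = μ.map (kwM ξ n) := by
  have h1 : kwM ξ n = kwG n ∘ (fun ω (i : Fin n) => ξ i ω) :=
    funext (kwM_eq_comp ξ n)
  have h2 : kwV ξ n = kwG n ∘ (fun ω (i : Fin n) => ξ (Fin.rev i) ω) :=
    funext (kwV_eq_comp ξ n)
  have hj1 : Measurable (fun ω (i : Fin n) => ξ (i : ℕ) ω) :=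
    measurable_pi_lambda _ (fun i => hmeas i)
  have hj2 : Measurable (fun ω (i : Fin n) => ξ ((Fin.rev i : Fin n) : ℕ) ω) :=
    measurable_pi_lambda _ (fun i => hmeas _)
  rw [h1, h2, ← Measure.map_map (kwG_measurable n) hj1,
    ← Measure.map_map (kwG_measurable n) hj2,
    kw_joint_map μ ξ hmeas hindep hident n (fun i => (i : ℕ)) Fin.val_injective,
    kw_joint_map μ ξ hmeas hindep hident n (fun i => ((Fin.rev i : Fin n) : ℕ))
      (Fin.val_injective.comp Fin.rev_injective)]

end KWlaw

section KWindep
variable {Ω : Type*} [MeasurableSpace Ω] (μ : Measure Ω) [IsProbabilityMeasure μ]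
  (ξ : ℕ → Ω → ℝ)

lemma kwV_indep (hmeas : ∀ n, Measurable (ξ n))
    (hindep : iIndepFun ξ μ) (n : ℕ) :
    IndepFun (kwV ξ n) (ξ n) μ := by
  classical
  have hd : Disjoint (Finset.range n) ({n} : Finset ℕ) := by simp
  have hbase := hindep.indepFun_finset (Finset.range n) {n} hd hmeas
  set φ : ((i : (Finset.range n : Finset ℕ)) → ℝ) → ℝ := fun x =>
    (Finset.range (n+1)).sup' Finset.nonempty_range_add_one
      (fun k => ∑ i : (Finset.range n : Finset ℕ), if k ≤ ((i : ℕ)) then x i else 0)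
    with hφdef
  set ψ : ((i : ({n} : Finset ℕ)) → ℝ) → ℝ := fun x => x ⟨n, by simp⟩ with hψdef
  have hφ : Measurable φ := by
    have he : φ = (Finset.range (n+1)).sup' Finset.nonempty_range_add_one
        (fun k x => ∑ i : (Finset.range n : Finset ℕ), if k ≤ ((i : ℕ)) then x i else 0) := by
      funext x; rw [Finset.sup'_apply]
    rw [he]
    refine Finset.measurable_sup' _ (fun k _ => Finset.measurable_sum _ (fun i _ => ?_))
    exact Measurable.ite (by simp) (measurable_pi_apply i) measurable_const
  have hψ : Measurable ψ := measurable_pi_apply _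
  have hcomp := hbase.comp hφ hψ
  have heqV : kwV ξ n = φ ∘ (fun ω (i : (Finset.range n : Finset ℕ)) => ξ i ω) := by
    funext ω
    show kwV ξ n ω = φ (fun i => ξ i ω)
    unfold kwV
    rw [hφdef]
    apply Finset.sup'_congr _ rfl
    intro k hk
    rw [Finset.mem_range] at hk
    rw [Finset.sum_coe_sort (Finset.range n) (fun j => if k ≤ j then ξ j ω else 0)]
    rw [← Finset.sum_filter]
    congr 1
    ext i
    simp only [Finset.mem_filter, Finset.mem_range, Finset.mem_Ico]
    omega
  have heqξ : ξ n = ψ ∘ (fun ω (i : ({n} : Finset ℕ)) => ξ i ω) := by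
    funext ω; rfl
  rw [heqV, heqξ]
  exact hcomp

end KWindep

section KWtransfer
variable {Ω : Type*} [MeasurableSpace Ω] (μ : Measure Ω)

lemma kw_transfer_int {f g : Ω → ℝ} (hf : Measurable f) (hg : Measurable g)
    (h : μ.map f = μ.map g) (φ : ℝ → ℝ) (hφ : Measurable φ) :
    Integrable (fun ω => φ (f ω)) μ ↔ Integrable (fun ω => φ (g ω)) μ := by
  have h1 := integrable_map_measure (μ := μ) (f := f)
    hφ.aestronglyMeasurable hf.aemeasurable
  have h2 := integrable_map_measure (μ := μ) (f := g)
    hφ.aestronglyMeasurable hg.aemeasurable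
  rw [h] at h1
  rw [show (φ ∘ f) = fun ω => φ (f ω) from rfl] at h1
  rw [show (φ ∘ g) = fun ω => φ (g ω) from rfl] at h2
  rw [← h1, ← h2]

lemma kw_transfer_integral {f g : Ω → ℝ} (hf : Measurable f) (hg : Measurable g)
    (h : μ.map f = μ.map g) (φ : ℝ → ℝ) (hφ : Measurable φ) :
    ∫ ω, φ (f ω) ∂μ = ∫ ω, φ (g ω) ∂μ := by
  rw [← integral_map hf.aemeasurable hφ.aestronglyMeasurable, h,
    integral_map hg.aemeasurable hφ.aestronglyMeasurable]

end KWtransfer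

/-- Kiefer–Wolfowitz: for an i.i.d. sequence `(ξₙ)` with negative mean and finite
second moment, the supremum of the random walk `Zₙ = ξ₁ + ⋯ + ξₙ` is integrable. -/
theorem integrable_sup_random_walk_negative_drift {Ω : Type*} [MeasurableSpace Ω]
    (μ : Measure Ω) [IsProbabilityMeasure μ] (ξ : ℕ → Ω → ℝ)
    (hmeas : ∀ n, Measurable (ξ n))
    (hindep : iIndepFun ξ μ)
    (hident : ∀ n, μ.map (ξ n) = μ.map (ξ 0))
    (hint : Integrable (ξ 0) μ)
    (hneg : ∫ ω, ξ 0 ω ∂μ < 0)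
    (hsq : Integrable (fun ω => (ξ 0 ω) ^ 2) μ) :
    Integrable (fun ω => ⨆ n : ℕ, ∑ i ∈ Finset.range n, ξ i ω) μ := by
  classical
  set m : ℝ := ∫ ω, ξ 0 ω ∂μ with hm
  set s : ℝ := ∫ ω, (ξ 0 ω) ^ 2 ∂μ with hs
  have hVmeas : ∀ n, Measurable (kwV ξ n) := kwV_measurable ξ hmeas
  have hMmeas : ∀ n, Measurable (kwM ξ n) := kwM_measurable ξ hmeas
  -- consequences of identical distribution
  have hint_n : ∀ n, Integrable (ξ n) μ := fun n => by
    have h := kw_transfer_int μ (hmeas n) (hmeas 0) (hident n) id measurable_id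
    simp only [id] at h
    exact h.mpr hint
  have hsq_n : ∀ n, Integrable (fun ω => ξ n ω ^ 2) μ := fun n =>
    (kw_transfer_int μ (hmeas n) (hmeas 0) (hident n) (fun x => x ^ 2)
      (measurable_id.pow_const 2)).mpr hsq
  have hE_n : ∀ n, ∫ ω, ξ n ω ∂μ = m := fun n => by
    have h := kw_transfer_integral μ (hmeas n) (hmeas 0) (hident n) id measurable_id
    simpa only [id] using h
  have hE2_n : ∀ n, ∫ ω, ξ n ω ^ 2 ∂μ = s := fun n =>
    kw_transfer_integral μ (hmeas n) (hmeas 0) (hident n) (fun x => x ^ 2)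
      (measurable_id.pow_const 2)
  have hmem2 : ∀ n, MemLp (ξ n) 2 μ := fun n =>
    (memLp_two_iff_integrable_sq (hmeas n).aestronglyMeasurable).2 (hsq_n n)
  -- L² bounds for kwV
  have hVmem2 : ∀ n, MemLp (kwV ξ n) 2 μ := by
    intro n
    induction n with
    | zero =>
      rw [show kwV ξ 0 = fun _ => (0:ℝ) from funext (kwV_zero ξ)]
      exact memLp_const 0
    | succ n ih =>
      have hadd : MemLp (kwV ξ n + ξ n) 2 μ := ih.add (hmem2 n)
      refine MemLp.of_le hadd (hVmeas (n+1)).aestronglyMeasurable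
        (Filter.Eventually.of_forall fun ω => ?_)
      rw [kwV_succ]
      simp only [Real.norm_eq_abs, Pi.add_apply]
      rcases le_total (kwV ξ n ω + ξ n ω) 0 with h | h
      · rw [max_eq_right h]; simp
      · rw [max_eq_left h]
  have hVint : ∀ n, Integrable (kwV ξ n) μ := fun n => (hVmem2 n).integrable one_le_two
  have hVsq_int : ∀ n, Integrable (fun ω => kwV ξ n ω ^ 2) μ := fun n =>
    (memLp_two_iff_integrable_sq (hVmeas n).aestronglyMeasurable).1 (hVmem2 n)
  have hmapVM : ∀ n, μ.map (kwV ξ n) = μ.map (kwM ξ n) :=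
    kw_map_V_eq_map_M μ ξ hmeas hindep hident
  have hMint : ∀ n, Integrable (kwM ξ n) μ := fun n => by
    have h := kw_transfer_int μ (hVmeas n) (hMmeas n) (hmapVM n) id measurable_id
    simp only [id] at h
    exact h.mp (hVint n)
  have hMsq_int : ∀ n, Integrable (fun ω => kwM ξ n ω ^ 2) μ := fun n =>
    (kw_transfer_int μ (hVmeas n) (hMmeas n) (hmapVM n) (fun x => x ^ 2)
      (measurable_id.pow_const 2)).mp (hVsq_int n)
  have hEVM : ∀ n, ∫ ω, kwV ξ n ω ∂μ = ∫ ω, kwM ξ n ω ∂μ := fun n => by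
    have h := kw_transfer_integral μ (hVmeas n) (hMmeas n) (hmapVM n) id measurable_id
    simpa only [id] using h
  have hE2VM : ∀ n, ∫ ω, kwV ξ n ω ^ 2 ∂μ = ∫ ω, kwM ξ n ω ^ 2 ∂μ := fun n =>
    kw_transfer_integral μ (hVmeas n) (hMmeas n) (hmapVM n) (fun x => x ^ 2)
      (measurable_id.pow_const 2)
  -- second moments are monotone
  have hq_mono : ∀ n, ∫ ω, kwV ξ n ω ^ 2 ∂μ ≤ ∫ ω, kwV ξ (n+1) ω ^ 2 ∂μ := fun n => by
    rw [hE2VM n, hE2VM (n+1)]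
    refine integral_mono (hMsq_int n) (hMsq_int (n+1)) fun ω => ?_
    have h0 := kwM_nonneg ξ n ω
    have h1 := kwM_mono ξ (Nat.le_succ n) ω
    exact pow_le_pow_left₀ h0 h1 2
  -- Lindley recursion inequality
  have hrec : ∀ n, ∫ ω, kwV ξ (n+1) ω ^ 2 ∂μ
      ≤ ∫ ω, kwV ξ n ω ^ 2 ∂μ + (2 * ((∫ ω, kwV ξ n ω ∂μ) * m) + s) := by
    intro n
    have hVξint : Integrable (fun ω => kwV ξ n ω * ξ n ω) μ := by
      have h := (kwV_indep μ ξ hmeas hindep n).integrable_mul (hVint n) (hint_n n)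
      exact h
    have haddmem : MemLp (kwV ξ n + ξ n) 2 μ := (hVmem2 n).add (hmem2 n)
    have haddsq : Integrable (fun ω => (kwV ξ n ω + ξ n ω) ^ 2) μ := by
      have h := (memLp_two_iff_integrable_sq
        ((hVmeas n).add (hmeas n)).aestronglyMeasurable).1 haddmem
      exact h
    have hstep1 : ∫ ω, kwV ξ (n+1) ω ^ 2 ∂μ ≤ ∫ ω, (kwV ξ n ω + ξ n ω) ^ 2 ∂μ := by
      refine integral_mono (hVsq_int (n+1)) haddsq fun ω => ?_
      rw [kwV_succ]
      rcases le_total (kwV ξ n ω + ξ n ω) 0 with h | h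
      · rw [max_eq_right h]
        simpa using sq_nonneg _
      · rw [max_eq_left h]
    have hmul : ∫ ω, kwV ξ n ω * ξ n ω ∂μ = (∫ ω, kwV ξ n ω ∂μ) * m := by
      have h := (kwV_indep μ ξ hmeas hindep n).integral_mul_eq_mul_integral
        (hVmeas n).aestronglyMeasurable (hmeas n).aestronglyMeasurable
      have h2 : ∫ ω, kwV ξ n ω * ξ n ω ∂μ = (∫ ω, kwV ξ n ω ∂μ) * ∫ ω, ξ n ω ∂μ := h
      rw [h2, hE_n n]
    have hexp : ∫ ω, (kwV ξ n ω + ξ n ω) ^ 2 ∂μ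
        = ∫ ω, kwV ξ n ω ^ 2 ∂μ + (2 * ((∫ ω, kwV ξ n ω ∂μ) * m) + s) := by
      have hptw : (fun ω => (kwV ξ n ω + ξ n ω) ^ 2)
          = fun ω => kwV ξ n ω ^ 2 + (2 * (kwV ξ n ω * ξ n ω) + ξ n ω ^ 2) := by
        funext ω; ring
      have i23 : Integrable (fun ω => 2 * (kwV ξ n ω * ξ n ω) + ξ n ω ^ 2) μ := by
        exact (hVξint.const_mul 2).add (hsq_n n)
      rw [hptw, integral_add (hVsq_int n) i23,
        integral_add (hVξint.const_mul 2) (hsq_n n), integral_const_mul, hmul, hE2_n n]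
    rw [← hexp]
    exact hstep1
  -- uniform bound on the mean of kwV
  have hbound : ∀ n, ∫ ω, kwV ξ n ω ∂μ ≤ s / (2 * (-m)) := by
    intro n
    have h1 := hq_mono n
    have h2 := hrec n
    have h3 : 0 ≤ 2 * ((∫ ω, kwV ξ n ω ∂μ) * m) + s := by linarith
    rw [le_div_iff₀ (by linarith)]
    nlinarith
  have hMbound : ∀ n, ∫ ω, kwM ξ n ω ∂μ ≤ s / (2 * (-m)) := fun n => by
    rw [← hEVM n]; exact hbound n
  -- pass to the supremum via monotone convergence
  have hg_meas : Measurable (fun ω => ⨆ n, ENNReal.ofReal (kwM ξ n ω)) :=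
    Measurable.iSup (fun n => (hMmeas n).ennreal_ofReal)
  have hmono : Monotone (fun n => fun ω => ENNReal.ofReal (kwM ξ n ω)) :=
    fun a b hab ω => ENNReal.ofReal_le_ofReal (kwM_mono ξ hab ω)
  have hlin : ∫⁻ ω, (⨆ n, ENNReal.ofReal (kwM ξ n ω)) ∂μ
      = ⨆ n, ∫⁻ ω, ENNReal.ofReal (kwM ξ n ω) ∂μ :=
    lintegral_iSup (fun n => (hMmeas n).ennreal_ofReal) hmono
  have hlim : ∫⁻ ω, (⨆ n, ENNReal.ofReal (kwM ξ n ω)) ∂μ ≤ ENNReal.ofReal (s / (2 * (-m))) := by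
    rw [hlin]
    refine iSup_le fun n => ?_
    rw [← ofReal_integral_eq_lintegral_ofReal (hMint n)
      (Filter.Eventually.of_forall (kwM_nonneg ξ n))]
    exact ENNReal.ofReal_le_ofReal (hMbound n)
  have hne : ∫⁻ ω, (⨆ n, ENNReal.ofReal (kwM ξ n ω)) ∂μ ≠ ⊤ :=
    (lt_of_le_of_lt hlim ENNReal.ofReal_lt_top).ne
  have hint' : Integrable (fun ω => (⨆ n, ENNReal.ofReal (kwM ξ n ω)).toReal) μ :=
    integrable_toReal_of_lintegral_ne_top hg_meas.aemeasurable hne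
  have hae := ae_lt_top hg_meas hne
  have haeq : (fun ω => (⨆ n, ENNReal.ofReal (kwM ξ n ω)).toReal)
      =ᵐ[μ] (fun ω => ⨆ n : ℕ, ∑ i ∈ Finset.range n, ξ i ω) := by
    filter_upwards [hae] with ω hω
    have hb : BddAbove (Set.range fun n => kwM ξ n ω) := by
      refine ⟨(⨆ n, ENNReal.ofReal (kwM ξ n ω)).toReal, ?_⟩
      rintro x ⟨n, rfl⟩
      have h1 : ENNReal.ofReal (kwM ξ n ω) ≤ ⨆ n, ENNReal.ofReal (kwM ξ n ω) :=
        le_iSup (fun n => ENNReal.ofReal (kwM ξ n ω)) n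
      have h2 := ENNReal.toReal_mono hω.ne h1
      rwa [ENNReal.toReal_ofReal (kwM_nonneg ξ n ω)] at h2
    have hofReal : ENNReal.ofReal (⨆ n, kwM ξ n ω) = ⨆ n, ENNReal.ofReal (kwM ξ n ω) :=
      Monotone.map_ciSup_of_continuousAt ENNReal.continuous_ofReal.continuousAt
        (fun a b hab => ENNReal.ofReal_le_ofReal hab) hb
    have hM0 : (0:ℝ) ≤ ⨆ n, kwM ξ n ω := by
      refine le_trans (le_of_eq (kwM_zero ξ ω).symm) (le_ciSup hb 0)
    rw [← hofReal, ENNReal.toReal_ofReal hM0]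
    apply le_antisymm
    · refine ciSup_le fun n => ?_
      have hbZ : BddAbove (Set.range fun k => ∑ i ∈ Finset.range k, ξ i ω) := by
        obtain ⟨b, hbb⟩ := hb
        refine ⟨b, ?_⟩
        rintro x ⟨k, rfl⟩
        exact le_trans (sum_le_kwM ξ (le_refl k) ω) (hbb ⟨k, rfl⟩)
      refine Finset.sup'_le _ _ fun k _ => le_ciSup hbZ k
    · refine ciSup_le fun n => ?_
      exact le_trans (sum_le_kwM ξ (le_refl n) ω) (le_ciSup hb n)
  exact hint'.congr haeq
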